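/- For every ξ ∈ ℝ^n with ξ ≠ 0 and every ε ∈ (0,1), there exists a unique ν > 0 such that Σ_i (|ξ_i| - (1-ε)ν)_+² = (εν)², where (t)_+ = max(t,0). -/
import Mathlib


theorem stmt_2 (n : ℕ) (ξ : Fin n → ℝ) (hξ : ξ ≠ 0) (ε : ℝ) (hε : ε ∈ Set.Ioo (0:ℝ) 1) :
    ∃! ν : ℝ, 0 < ν ∧
      ∑ i, (max (|ξ i| - (1 - ε) * ν) 0) ^ 2 = (ε * ν) ^ 2 := by
  obtain ⟨hε0, hε1⟩ := hε
  have hc0 : 0 < 1 - ε := by linarith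
  set f : ℝ → ℝ := fun ν => (∑ i, (max (|ξ i| - (1 - ε) * ν) 0) ^ 2) - (ε * ν) ^ 2 with hf
  have hcont : Continuous f := by
    apply Continuous.sub
    · exact continuous_finset_sum _ fun i _ => by fun_prop
    · fun_prop
  have hanti : StrictAntiOn f (Set.Ici 0) := by
    intro x hx y hy hxy
    have h1 : ∑ i, (max (|ξ i| - (1 - ε) * y) 0) ^ 2 ≤
        ∑ i, (max (|ξ i| - (1 - ε) * x) 0) ^ 2 := by
      apply Finset.sum_le_sum
      intro i _
      have hle : max (|ξ i| - (1 - ε) * y) 0 ≤ max (|ξ i| - (1 - ε) * x) 0 := by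
        apply max_le_max _ le_rfl
        nlinarith
      exact pow_le_pow_left₀ (le_max_right _ _) hle 2
    have hx0 : (0:ℝ) ≤ x := hx
    have h2 : (ε * x) ^ 2 < (ε * y) ^ 2 := by
      have hlt : ε * x < ε * y := by nlinarith
      have : 0 ≤ ε * x := by positivity
      nlinarith
    simp only [hf]
    linarith
  have hf0 : 0 < f 0 := by
    obtain ⟨i, hi⟩ := Function.ne_iff.mp hξ
    have : f 0 = ∑ i, (max (|ξ i|) 0) ^ 2 := by
      simp [hf]
    rw [this]
    apply Finset.sum_pos'
    · intro j _; positivity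
    · refine ⟨i, Finset.mem_univ i, ?_⟩
      have hi' : ξ i ≠ 0 := by simpa using hi
      have : 0 < |ξ i| := abs_pos.mpr hi'
      have hm : max (|ξ i|) 0 = |ξ i| := max_eq_left (abs_nonneg _)
      rw [hm]; positivity
  set M : ℝ := ∑ i, |ξ i| with hM
  have hM0 : 0 ≤ M := Finset.sum_nonneg fun i _ => abs_nonneg _
  set b : ℝ := (M + 1) / (1 - ε) with hb
  have hb0 : 0 < b := by positivity
  have hcb : (1 - ε) * b = M + 1 := by
    rw [hb]; field_simp
  have hfb : f b < 0 := by
    have hzero : ∀ i : Fin n, max (|ξ i| - (1 - ε) * b) 0 = 0 := by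
      intro i
      apply max_eq_right
      have : |ξ i| ≤ M := Finset.single_le_sum (f := fun j => |ξ j|)
        (fun j _ => abs_nonneg _) (Finset.mem_univ i)
      rw [hcb]; linarith
    simp only [hf]
    rw [Finset.sum_congr rfl fun i _ => by rw [hzero i]]
    simp only [ne_eq, OfNat.ofNat_ne_zero, not_false_eq_true, zero_pow,
      Finset.sum_const, smul_zero, zero_sub, neg_neg, neg_lt, neg_zero]
    positivity
  have hmem : (0:ℝ) ∈ Set.Icc (f b) (f 0) := ⟨le_of_lt hfb, le_of_lt hf0⟩
  obtain ⟨ν, hνIcc, hνf⟩ :=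
    intermediate_value_Icc' (le_of_lt hb0) hcont.continuousOn hmem
  have hν0 : 0 < ν := by
    rcases eq_or_lt_of_le hνIcc.1 with h | h
    · exfalso
      subst h
      linarith
    · exact h
  refine ⟨ν, ⟨hν0, by have := hνf; simp only [hf] at this; linarith⟩, ?_⟩
  rintro y ⟨hy0, hyeq⟩
  have hfy : f y = 0 := by simp only [hf]; linarith
  exact hanti.injOn (le_of_lt hy0) (le_of_lt hν0) (by rw [hfy, hνf])
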